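/- Abelian property of activated random walk on a finite set: all legal sequences of topplings within a finite set V that stabilize V yield the same odometer (and hence the same final configuration and the same number of ejected particles). -/

import Mathlib

/-- An activated random walk instruction. -/
inductive ArwInstr
  | left
  | right
  | sleep
deriving DecidableEq

/-- A state of activated random walk: the number of active particles at each site,
and whether the site holds a (single) sleeping particle. -/
structure ArwState where
  active : ℤ → ℕ
  asleep : ℤ → Bool

/-- One active particle arrives at site `w`, waking a sleeping particle if present. -/
def arrive (st : ArwState) (w : ℤ) : ArwState where
  active := Function.update st.active w (st.active w + (if st.asleep w then 2 else 1))
  asleep := Function.update st.asleep w false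

/-- Topple site `v`: execute its next unused instruction (`u v` instructions have been
used so far, the stacks being indexed from `1`). A `sleep` instruction puts a lone
active particle to sleep and is otherwise a no-op. -/
def topple (I : ℤ → ℕ → ArwInstr) (u : ℤ → ℕ) (st : ArwState) (v : ℤ) : ArwState :=
  match I v (u v + 1) with
  | .left  => arrive { st with active := Function.update st.active v (st.active v - 1) } (v - 1)
  | .right => arrive { st with active := Function.update st.active v (st.active v - 1) } (v + 1)
  | .sleep =>
      if st.active v = 1 ∧ st.asleep v = false then
        { active := Function.update st.active v 0,
          asleep := Function.update st.asleep v true }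
      else st

/-- Run a sequence of topplings, tracking the odometer `u` and the state. -/
def runArw (I : ℤ → ℕ → ArwInstr) : List ℤ → (ℤ → ℕ) × ArwState → (ℤ → ℕ) × ArwState
  | [], p => p
  | v :: rest, (u, st) =>
      runArw I rest (Function.update u v (u v + 1), topple I u st v)

/-- A toppling sequence is legal if each toppled site holds an active particle
at the time it is toppled. -/
def LegalSeq (I : ℤ → ℕ → ArwInstr) : List ℤ → (ℤ → ℕ) → ArwState → Prop
  | [], _, _ => True
  | v :: rest, u, st =>
      1 ≤ st.active v ∧ LegalSeq I rest (Function.update u v (u v + 1)) (topple I u st v)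

/-- The initial state of the configuration `σ`, with no sleeping particles. -/
def initState (σ : ℤ → ℕ) : ArwState := ⟨σ, fun _ => false⟩

/-- A toppling sequence stabilizes `V` if it only topples sites of `V`, is legal from
the initial configuration `σ` (with no sleeping particles), and afterwards no site of
`V` holds an active particle. -/
def Stabilizes (I : ℤ → ℕ → ArwInstr) (σ : ℤ → ℕ) (V : Set ℤ) (seq : List ℤ) : Prop :=
  (∀ v ∈ seq, v ∈ V) ∧ LegalSeq I seq 0 (initState σ) ∧
    ∀ v ∈ V, (runArw I seq (0, initState σ)).2.active v = 0



lemma active_mono (I : ℤ → ℕ → ArwInstr) (u : ℤ → ℕ) (st : ArwState) (v w : ℤ)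
    (hvw : w ≠ v) : st.active w ≤ (topple I u st v).active w := by
  unfold topple arrive
  rcases I v (u v + 1) <;>
    simp only [Function.update_apply, if_neg hvw] <;>
    split_ifs with h1 h2 h3 <;> simp_all <;> omega

lemma ArwState.ext2 {a b : ArwState} (h1 : ∀ x, a.active x = b.active x)
    (h2 : ∀ x, a.asleep x = b.asleep x) : a = b := by
  cases a; cases b
  simp only [ArwState.mk.injEq]
  exact ⟨funext h1, funext h2⟩

set_option maxHeartbeats 4000000 in
lemma topple_comm (I : ℤ → ℕ → ArwInstr) (u : ℤ → ℕ) (st : ArwState) {v w : ℤ}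
    (hvw : v ≠ w) (hv : 1 ≤ st.active v) (hw : 1 ≤ st.active w) :
    topple I u (topple I u st v) w = topple I u (topple I u st w) v := by
  have e1 : w - 1 ≠ w := by omega
  have e2 : v - 1 ≠ v := by omega
  have e3 : w ≠ v := Ne.symm hvw
  have e4 : w + 1 ≠ w := by omega
  have e5 : v + 1 ≠ v := by omega
  rcases h1 : I v (u v + 1) <;> rcases h2 : I w (u w + 1) <;>
    refine ArwState.ext2 (fun x => ?_) (fun x => ?_) <;>
    simp only [topple, h1, h2, arrive, Function.update_apply, if_neg e1, if_neg e2,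
      if_neg e3, if_neg hvw, if_neg e4, if_neg e5] <;>

    split_ifs <;> subst_vars <;>
    first
      | contradiction
      | rfl
      | omega
      | (simp only [Function.update_apply]; split_ifs <;> subst_vars <;> (first | contradiction | rfl | omega | simp_all) <;> done)
      | (congr 1 <;> omega)
      | (congr 2 <;> omega)
      | (congr 3 <;> omega)
      | (simp only [show (w + 1 : ℤ) = v - 1 from by omega] at *; simp_all <;> omega)
      | (simp only [show (w + 1 : ℤ) = v - 1 from by omega] at *; simp_all)
      | (simp only [show (v - 1 : ℤ) = w + 1 from by omega] at *; simp_all <;> omega)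
      | (simp only [show (v - 1 : ℤ) = w + 1 from by omega] at *; simp_all)
      | (simp only [show (v + 1 : ℤ) = w - 1 from by omega] at *; simp_all <;> omega)
      | (simp only [show (v + 1 : ℤ) = w - 1 from by omega] at *; simp_all)
      | (simp only [show (w - 1 : ℤ) = v + 1 from by omega] at *; simp_all <;> omega)
      | (simp only [show (w - 1 : ℤ) = v + 1 from by omega] at *; simp_all)
      | (simp only [show (w + 1 : ℤ) = v + 1 from by omega] at *; simp_all <;> omega)
      | (simp only [show (w + 1 : ℤ) = v + 1 from by omega] at *; simp_all)
      | (simp only [show (v + 1 : ℤ) = w + 1 from by omega] at *; simp_all <;> omega)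
      | (simp only [show (v + 1 : ℤ) = w + 1 from by omega] at *; simp_all)
      | (simp only [show (w - 1 : ℤ) = v - 1 from by omega] at *; simp_all <;> omega)
      | (simp only [show (w - 1 : ℤ) = v - 1 from by omega] at *; simp_all)
      | (simp only [show (v - 1 : ℤ) = w - 1 from by omega] at *; simp_all <;> omega)
      | (simp only [show (v - 1 : ℤ) = w - 1 from by omega] at *; simp_all)
      | (simp only [show (w + 1 : ℤ) = v from by omega] at *; simp_all <;> omega)
      | (simp only [show (w + 1 : ℤ) = v from by omega] at *; simp_all)
      | (simp only [show (v : ℤ) = w + 1 from by omega] at *; simp_all <;> omega)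
      | (simp only [show (v : ℤ) = w + 1 from by omega] at *; simp_all)
      | (simp only [show (w - 1 : ℤ) = v from by omega] at *; simp_all <;> omega)
      | (simp only [show (w - 1 : ℤ) = v from by omega] at *; simp_all)
      | (simp only [show (v : ℤ) = w - 1 from by omega] at *; simp_all <;> omega)
      | (simp only [show (v : ℤ) = w - 1 from by omega] at *; simp_all)
      | (simp only [show (v + 1 : ℤ) = w from by omega] at *; simp_all <;> omega)
      | (simp only [show (v + 1 : ℤ) = w from by omega] at *; simp_all)
      | (simp only [show (w : ℤ) = v + 1 from by omega] at *; simp_all <;> omega)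
      | (simp only [show (w : ℤ) = v + 1 from by omega] at *; simp_all)
      | (simp only [show (v - 1 : ℤ) = w from by omega] at *; simp_all <;> omega)
      | (simp only [show (v - 1 : ℤ) = w from by omega] at *; simp_all)
      | (simp only [show (w : ℤ) = v - 1 from by omega] at *; simp_all <;> omega)
      | (simp only [show (w : ℤ) = v - 1 from by omega] at *; simp_all)
      | (simp_all; done)
      | (simp_all; omega)

lemma topple_congr (I : ℤ → ℕ → ArwInstr) {u u' : ℤ → ℕ} (st : ArwState) (v : ℤ)
    (h : u v = u' v) : topple I u st v = topple I u' st v := by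
  simp [topple, h]

/-- If `v` is never toppled, its number of active particles does not decrease. -/
lemma run_active_mono (I : ℤ → ℕ → ArwInstr) (v : ℤ) :
    ∀ (l : List ℤ) (u : ℤ → ℕ) (st : ArwState), v ∉ l →
      st.active v ≤ (runArw I l (u, st)).2.active v := by
  intro l
  induction l with
  | nil => intro u st _; simp [runArw]
  | cons w rest ih =>
      intro u st hv
      simp only [List.mem_cons, not_or] at hv
      calc st.active v ≤ (topple I u st w).active v :=
            active_mono I u st w v hv.1
        _ ≤ _ := ih _ _ hv.2

/-- Moving the first occurrence of `v` to the front of a legal sequence. -/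
lemma move_to_front (I : ℤ → ℕ → ArwInstr) (v : ℤ) :
    ∀ (γ : List ℤ) (δ : List ℤ) (u : ℤ → ℕ) (st : ArwState), v ∉ γ →
      1 ≤ st.active v → LegalSeq I (γ ++ v :: δ) u st →
      LegalSeq I (v :: (γ ++ δ)) u st ∧
        runArw I (v :: (γ ++ δ)) (u, st) = runArw I (γ ++ v :: δ) (u, st) := by
  intro γ
  induction γ with
  | nil => intro δ u st _ _ h; exact ⟨h, rfl⟩
  | cons w γ' ih =>
      intro δ u st hvγ hv hL
      simp only [List.mem_cons, not_or] at hvγ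
      obtain ⟨hvw, hvγ'⟩ := hvγ
      obtain ⟨hw, hL'⟩ := hL
      set u1 := Function.update u w (u w + 1) with hu1
      set st1 := topple I u st w with hst1
      have hv1 : 1 ≤ st1.active v := le_trans hv (active_mono I u st w v hvw)
      obtain ⟨ihL, ihR⟩ := ih δ u1 st1 hvγ' hv1 hL'
      obtain ⟨_, ihL'⟩ := ihL
      -- key state/odometer equalities
      have hA : topple I (Function.update u v (u v + 1)) (topple I u st v) w
          = topple I u (topple I u st v) w :=
        topple_congr I _ w (by simp [Function.update_apply, Ne.symm hvw])
      have hB : topple I u st1 v = topple I u1 st1 v :=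
        topple_congr I st1 v (by simp [hu1, Function.update_apply, hvw])
      have hcs : topple I (Function.update u v (u v + 1)) (topple I u st v) w
          = topple I u1 st1 v := by
        rw [hA, topple_comm I u st hvw hv hw, ← hst1, hB]
      have hus : Function.update (Function.update u v (u v + 1)) w
            ((Function.update u v (u v + 1)) w + 1)
          = Function.update u1 v (u1 v + 1) := by
        rw [Function.update_comm hvw]
        simp [hu1, Function.update_apply, hvw, Ne.symm hvw]
      constructor
      · refine ⟨hv, ?_⟩
        refine ⟨le_trans hw (active_mono I u st v w (Ne.symm hvw)), ?_⟩
        rw [hcs, hus]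
        exact ihL'
      · simp only [List.cons_append, runArw, ← hu1, ← hst1]
        rw [hcs, hus]
        rw [← ihR]
        rfl

/-- Extract the first occurrence of an element. -/
lemma first_occ {v : ℤ} : ∀ {l : List ℤ}, v ∈ l →
    ∃ γ δ, l = γ ++ v :: δ ∧ v ∉ γ := by
  intro l
  induction l with
  | nil => intro h; simp at h
  | cons w rest ih =>
      intro h
      by_cases hvw : v = w
      · exact ⟨[], rest, by simp [hvw], by simp⟩
      · obtain ⟨γ, δ, h1, h2⟩ := ih (by
          rcases List.mem_cons.mp h with h | h
          · exact absurd h hvw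
          · exact h)
        exact ⟨w :: γ, δ, by simp [h1], by simp [hvw, h2]⟩

/-- Strong abelian inequality: any legal sequence within `V` is dominated in counts
by any sequence stabilizing `V`. -/
lemma key_lemma (I : ℤ → ℕ → ArwInstr) (V : Set ℤ) :
    ∀ (β α : List ℤ) (u : ℤ → ℕ) (st : ArwState),
      (∀ w ∈ β, w ∈ V) → LegalSeq I β u st → LegalSeq I α u st →
      (∀ w ∈ V, (runArw I α (u, st)).2.active w = 0) →
      ∀ v : ℤ, β.count v ≤ α.count v := by
  intro β
  induction β with
  | nil => intro α u st _ _ _ _ v; simp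
  | cons b β' ih =>
      intro α u st hmem hLβ hLα hstab v
      obtain ⟨hb, hLβ'⟩ := hLβ
      -- b must occur in α
      have hbα : b ∈ α := by
        by_contra hno
        have := run_active_mono I b α u st hno
        have h0 := hstab b (hmem b List.mem_cons_self)
        omega
      obtain ⟨γ, δ, hαeq, hbγ⟩ := first_occ hbα
      subst hαeq
      obtain ⟨hLf, hRf⟩ := move_to_front I b γ δ u st hbγ hb hLα
      obtain ⟨_, hLf'⟩ := hLf
      have hstab' : ∀ w ∈ V, (runArw I (γ ++ δ)
          (Function.update u b (u b + 1), topple I u st b)).2.active w = 0 := by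
        intro w hw
        have : runArw I (γ ++ δ) (Function.update u b (u b + 1), topple I u st b)
            = runArw I (γ ++ b :: δ) (u, st) := hRf
        rw [this]
        exact hstab w hw
      have hmem' : ∀ w ∈ β', w ∈ V := fun w hw => hmem w (List.mem_cons_of_mem _ hw)
      have hcount := ih (γ ++ δ) _ _ hmem' hLβ' hLf' hstab' v
      by_cases hvb : v = b
      · subst hvb
        simp only [List.count_cons_self, List.count_append] at *
        omega
      · have h1 : (b :: β').count v = β'.count v := by
          simp [List.count_cons, Ne.symm hvb]
        have h2 : (γ ++ b :: δ).count v = (γ ++ δ).count v := by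
          simp [List.count_append, List.count_cons, Ne.symm hvb]
        omega


/-- abelian property: all legal toppling sequences within a finite set `V`
that stabilize `V` yield the same odometer. -/
theorem abelian_property (I : ℤ → ℕ → ArwInstr) (σ : ℤ → ℕ) (V : Set ℤ)
    (hV : V.Finite) (seq₁ seq₂ : List ℤ)
    (h₁ : Stabilizes I σ V seq₁) (h₂ : Stabilizes I σ V seq₂) :
    ∀ v : ℤ, seq₁.count v = seq₂.count v := by
  intro v
  obtain ⟨m1, l1, s1⟩ := h₁
  obtain ⟨m2, l2, s2⟩ := h₂
  exact le_antisymm (key_lemma I V seq₁ seq₂ 0 (initState σ) m1 l1 l2 s2 v)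
    (key_lemma I V seq₂ seq₁ 0 (initState σ) m2 l2 l1 s1 v)
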